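/- (Evaluation of the Miller function at a twisted point.) Let K ⊆ L be fields, δ ∈ K with δ ≠ 0, and α ∈ L with α² = δ. Let c_{Z²}, c_{XY}, c_{XZ}, Y3, Z3 ∈ K and X0, Y0, Z0 ∈ K with X0 ≠ 0, Z0 ≠ 0 and Z3·Y0 − Y3·Z0 ≠ 0. Set y0 = Y0/Z0 and η = (Z0 + Y0)/(X0·δ). Then in L: (c_{Z²}·(Z0² + Y0·Z0) + c_{XY}·X0·Y0·α + c_{XZ}·X0·Z0·α) / ((Z3·Y0 − Y3·Z0)·X0·α) = (c_{Z²}·η·α + c_{XY}·y0 + c_{XZ}) · (Z0/(Z3·Y0 − Y3·Z0)); in particular, the value φ(X0·α : Y0 : Z0)/(l1·l2)(X0·α : Y0 : Z0) equals c_{Z²}·η·α + c_{XY}·y0 + c_{XZ} up to a nonzero multiplicative factor from K. -/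

import Mathlib

theorem miller_function_evaluation_at_twisted_point
    (K L : Type*) [Field K] [Field L] [Algebra K L]
    (δ : K) (hδ : δ ≠ 0) (α : L) (hα : α ^ 2 = algebraMap K L δ)
    (cZ2 cXY cXZ Y3 Z3 X0 Y0 Z0 : K)
    (hX0 : X0 ≠ 0) (hZ0 : Z0 ≠ 0) (hl : Z3 * Y0 - Y3 * Z0 ≠ 0)
    (y0 η : K) (hy0 : y0 = Y0 / Z0) (hη : η = (Z0 + Y0) / (X0 * δ)) :
    (algebraMap K L cZ2 * ((algebraMap K L Z0) ^ 2 + algebraMap K L Y0 * algebraMap K L Z0)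
        + algebraMap K L cXY * (algebraMap K L X0 * α) * algebraMap K L Y0
        + algebraMap K L cXZ * (algebraMap K L X0 * α) * algebraMap K L Z0)
      / ((algebraMap K L Z3 * algebraMap K L Y0 - algebraMap K L Y3 * algebraMap K L Z0)
          * (algebraMap K L X0 * α))
    = (algebraMap K L cZ2 * algebraMap K L η * α
        + algebraMap K L cXY * algebraMap K L y0 + algebraMap K L cXZ)
      * (algebraMap K L Z0
          / (algebraMap K L Z3 * algebraMap K L Y0 - algebraMap K L Y3 * algebraMap K L Z0)) := by
  have inj : Function.Injective (algebraMap K L) := (algebraMap K L).injective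
  have hδL : algebraMap K L δ ≠ 0 := fun h => hδ (inj (by simpa using h))
  have hαne : α ≠ 0 := fun h => hδL (by rw [← hα, h]; ring)
  have hX0L : algebraMap K L X0 ≠ 0 := fun h => hX0 (inj (by simpa using h))
  have hZ0L : algebraMap K L Z0 ≠ 0 := fun h => hZ0 (inj (by simpa using h))
  have hlL : algebraMap K L Z3 * algebraMap K L Y0 - algebraMap K L Y3 * algebraMap K L Z0 ≠ 0 := by
    intro h
    apply hl; apply inj
    simpa [map_sub, map_mul] using h
  subst hy0 hη
  simp only [map_div₀, map_add, map_mul]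
  field_simp
  linear_combination (-(algebraMap K L cZ2 * algebraMap K L Z0 * (algebraMap K L Z0 + algebraMap K L Y0)) / (algebraMap K L Y0 * algebraMap K L Z3 - algebraMap K L Z0 * algebraMap K L Y3)) * hα
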